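/- Let H be a complex Hilbert space and let (P n)_{n∈ℕ} be a family of continuous linear maps on H such that each P n is a self-adjoint idempotent (orthogonal projection), P m ∘ P n = 0 whenever m ≠ n, and for every x ∈ H the series ∑_{n} P n x converges to x. Let C > 0, p > 0, and let G : H →L H be a continuous linear map with G ∘ P n = P (n+1) ∘ G ∘ P n and ‖G ∘ P n‖ ≤ C·(n+1)^{-p} for every n ∈ ℕ. Then for every k ∈ ℕ the operator norm of the k-th power satisfies ‖G^k‖ ≤ C^k · (k!)^{-p}. -/

import Mathlib

open scoped ComplexConjugate
open Finset

/-- Pythagoras for a convergent series of pairwise orthogonal vectors. -/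
lemma aux_hasSum_norm_sq {H : Type*} [NormedAddCommGroup H] [InnerProductSpace ℂ H]
    (f : ℕ → H) (a : H)
    (horth : ∀ m n, m ≠ n → (inner ℂ (f m) (f n) : ℂ) = 0)
    (hf : HasSum f a) :
    HasSum (fun n => ‖f n‖ ^ 2) (‖a‖ ^ 2) := by
  have key : ∀ s : Finset ℕ, ∑ n ∈ s, ‖f n‖ ^ 2 = ‖∑ n ∈ s, f n‖ ^ 2 := by
    intro s
    have h1 : (inner ℂ (∑ n ∈ s, f n) (∑ n ∈ s, f n) : ℂ)
        = ∑ m ∈ s, ∑ n ∈ s, (inner ℂ (f m) (f n) : ℂ) := by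
      rw [sum_inner]
      exact Finset.sum_congr rfl fun m _ => inner_sum _ _ _
    have h2 : ∀ m ∈ s, ∑ n ∈ s, (inner ℂ (f m) (f n) : ℂ) = inner ℂ (f m) (f m) := by
      intro m hm
      exact Finset.sum_eq_single_of_mem m hm fun n _ hn => horth m n (Ne.symm hn)
    have h3 : (inner ℂ (∑ n ∈ s, f n) (∑ n ∈ s, f n) : ℂ)
        = ∑ m ∈ s, (inner ℂ (f m) (f m) : ℂ) := by
      rw [h1]; exact Finset.sum_congr rfl h2
    have h4 := congrArg (RCLike.re (K := ℂ)) h3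
    rw [inner_self_eq_norm_sq (𝕜 := ℂ), map_sum] at h4
    rw [h4]
    exact Finset.sum_congr rfl fun m _ => (inner_self_eq_norm_sq (𝕜 := ℂ) (f m)).symm
  have h5 : Filter.Tendsto (fun s : Finset ℕ => ‖∑ n ∈ s, f n‖ ^ 2)
      Filter.atTop (nhds (‖a‖ ^ 2)) := (hf.norm.pow 2)
  have : HasSum (fun n => ‖f n‖ ^ 2) (‖a‖ ^ 2) := by
    unfold HasSum
    simpa [key] using h5
  exact this

theorem stmt_0 {H : Type*} [NormedAddCommGroup H] [InnerProductSpace ℂ H] [CompleteSpace H]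
    (P : ℕ → H →L[ℂ] H)
    (hsa : ∀ n, IsSelfAdjoint (P n))
    (hidem : ∀ n, P n ∘L P n = P n)
    (horth : ∀ m n, m ≠ n → P m ∘L P n = 0)
    (hsum : ∀ x : H, HasSum (fun n => P n x) x)
    (C p : ℝ) (hC : 0 < C) (hp : 0 < p)
    (G : H →L[ℂ] H)
    (hGP : ∀ n, G ∘L P n = P (n + 1) ∘L (G ∘L P n))
    (hGnorm : ∀ n, ‖G ∘L P n‖ ≤ C * ((n : ℝ) + 1) ^ (-p)) :
    ∀ k : ℕ, ‖G ^ k‖ ≤ C ^ k * (k.factorial : ℝ) ^ (-p) := by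
  -- adjoint equality
  have hadj : ∀ n, ContinuousLinearMap.adjoint (P n) = P n := fun n =>
    (ContinuousLinearMap.isSelfAdjoint_iff'.mp (hsa n))
  -- orthogonality of ranges, in inner product form
  have hinner : ∀ m n, m ≠ n → ∀ u v : H, (inner ℂ (P m u) (P n v) : ℂ) = 0 := by
    intro m n hmn u v
    have h1 : (inner ℂ (P m u) (P n v) : ℂ) = inner ℂ u ((P m ∘L P n) v) := by
      rw [← ContinuousLinearMap.adjoint_inner_right]
      rw [hadj m]; rfl
    rw [h1, horth m n hmn]
    simp
  -- projections are contractions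
  have hPle : ∀ n (x : H), ‖P n x‖ ≤ ‖x‖ := by
    intro n x
    rcases eq_or_ne (P n x) 0 with h | h
    · simp [h]
    have h1 : (inner ℂ (P n x) (P n x) : ℂ) = inner ℂ x (P n (P n x)) := by
      rw [← ContinuousLinearMap.adjoint_inner_right, hadj n]
    have h2 : P n (P n x) = P n x := by
      have := congrArg (fun T : H →L[ℂ] H => T x) (hidem n); simpa using this
    rw [h2] at h1
    have h3 : ‖P n x‖ ^ 2 = RCLike.re (K := ℂ) (inner ℂ x (P n x) : ℂ) := by
      rw [← inner_self_eq_norm_sq (𝕜 := ℂ), h1]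
    have h4 : RCLike.re (K := ℂ) (inner ℂ x (P n x) : ℂ) ≤ ‖x‖ * ‖P n x‖ := by
      calc RCLike.re (K := ℂ) (inner ℂ x (P n x) : ℂ) ≤ ‖(inner ℂ x (P n x) : ℂ)‖ :=
            RCLike.re_le_norm _
        _ ≤ ‖x‖ * ‖P n x‖ := norm_inner_le_norm _ _
    have h5 : ‖P n x‖ * ‖P n x‖ ≤ ‖x‖ * ‖P n x‖ := by
      rw [← sq]; rw [h3] at *; linarith [h4]
    exact le_of_mul_le_mul_right h5 (norm_pos_iff.mpr h)
  -- grading of powers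
  have hGk : ∀ k n, (G ^ k) ∘L P n = P (n + k) ∘L ((G ^ k) ∘L P n) := by
    intro k
    induction k with
    | zero =>
      intro n
      simp only [pow_zero]
      rw [ContinuousLinearMap.one_def, ContinuousLinearMap.id_comp]
      exact (hidem n).symm
    | succ k ih =>
      intro n
      have h1 : (G ^ (k + 1)) ∘L P n = (G ^ k) ∘L (G ∘L P n) := by
        rw [pow_succ]; rfl
      have h2 : (G ^ (k + 1)) ∘L P n = ((G ^ k) ∘L P (n + 1)) ∘L (G ∘L P n) := by
        conv_lhs => rw [h1, hGP n]
        rw [ContinuousLinearMap.comp_assoc]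
      have h3 : n + 1 + k = n + (k + 1) := by omega
      conv_lhs => rw [h2, ih (n + 1)]
      rw [ContinuousLinearMap.comp_assoc, ← h2, h3]
  -- norm bound for graded pieces
  have hnorm : ∀ k n, ‖(G ^ k) ∘L P n‖ ≤ C ^ k * (∏ j ∈ range k, ((n : ℝ) + j + 1)) ^ (-p) := by
    intro k
    induction k with
    | zero =>
      intro n
      simp only [pow_zero, range_zero, prod_empty, Real.one_rpow, one_mul]
      rw [ContinuousLinearMap.one_def, ContinuousLinearMap.id_comp]
      exact (P n).opNorm_le_bound zero_le_one (by simpa using hPle n)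
    | succ k ih =>
      intro n
      have hprodpos : ∀ m : ℕ, (0 : ℝ) < ∏ j ∈ range m, ((n : ℝ) + 1 + j + 1) := by
        intro m
        exact Finset.prod_pos fun j _ => by positivity
      have h1 : (G ^ (k + 1)) ∘L P n = ((G ^ k) ∘L P (n + 1)) ∘L (G ∘L P n) := by
        have hpow : G ^ (k + 1) = G ^ k * G := pow_succ G k
        have h0 : (G ^ (k + 1)) ∘L P n = (G ^ k) ∘L (G ∘L P n) := by rw [hpow]; rfl
        conv_lhs => rw [h0, hGP n]
        rw [ContinuousLinearMap.comp_assoc]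
      calc ‖(G ^ (k + 1)) ∘L P n‖ ≤ ‖(G ^ k) ∘L P (n + 1)‖ * ‖G ∘L P n‖ := by
            rw [h1]; exact ContinuousLinearMap.opNorm_comp_le _ _
        _ ≤ (C ^ k * (∏ j ∈ range k, ((n : ℝ) + 1 + j + 1)) ^ (-p)) *
              (C * ((n : ℝ) + 1) ^ (-p)) := by
            have ihn := ih (n + 1)
            push_cast at ihn
            exact mul_le_mul ihn (hGnorm n) (norm_nonneg _) (by positivity)
        _ = C ^ (k + 1) * ((∏ j ∈ range k, ((n : ℝ) + 1 + j + 1)) * ((n : ℝ) + 1)) ^ (-p) := by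
            rw [Real.mul_rpow (le_of_lt (hprodpos k)) (by positivity)]
            ring
        _ = C ^ (k + 1) * (∏ j ∈ range (k + 1), ((n : ℝ) + j + 1)) ^ (-p) := by
            congr 2
            rw [Finset.prod_range_succ']
            congr 1
            · exact Finset.prod_congr rfl fun j _ => by push_cast; ring
            · simp
  -- compare the product with the factorial
  have hfact : ∀ (k n : ℕ), C ^ k * (∏ j ∈ range k, ((n : ℝ) + j + 1)) ^ (-p)
      ≤ C ^ k * (k.factorial : ℝ) ^ (-p) := by
    intro k n
    apply mul_le_mul_of_nonneg_left _ (by positivity)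
    have hfe : ((k.factorial : ℝ)) = ∏ j ∈ range k, ((j : ℝ) + 1) := by
      rw [← Finset.prod_range_add_one_eq_factorial]
      push_cast
      rfl
    have hle : (k.factorial : ℝ) ≤ ∏ j ∈ range k, ((n : ℝ) + j + 1) := by
      rw [hfe]
      refine Finset.prod_le_prod (fun j _ => by positivity) (fun j _ => ?_)
      have h0 : (0 : ℝ) ≤ (n : ℝ) := Nat.cast_nonneg n
      linarith
    exact Real.rpow_le_rpow_of_nonpos (by positivity) hle (by linarith)
  -- the combined bound
  have hbound : ∀ k n, ‖(G ^ k) ∘L P n‖ ≤ C ^ k * (k.factorial : ℝ) ^ (-p) :=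
    fun k n => le_trans (hnorm k n) (hfact k n)
  intro k
  set M : ℝ := C ^ k * (k.factorial : ℝ) ^ (-p) with hM
  have hMpos : 0 < M := by positivity
  apply ContinuousLinearMap.opNorm_le_bound _ hMpos.le
  intro x
  -- series expansions
  have hs0 : HasSum (fun n => (G ^ k) (P n x)) ((G ^ k) x) := (G ^ k).hasSum (hsum x)
  have horthP : ∀ m n, m ≠ n → (inner ℂ (P m x) (P n x) : ℂ) = 0 :=
    fun m n hmn => hinner m n hmn x x
  have hs2 : HasSum (fun n => ‖P n x‖ ^ 2) (‖x‖ ^ 2) :=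
    aux_hasSum_norm_sq _ _ horthP (hsum x)
  have horthG : ∀ m n, m ≠ n → (inner ℂ ((G ^ k) (P m x)) ((G ^ k) (P n x)) : ℂ) = 0 := by
    intro m n hmn
    have hm : (G ^ k) (P m x) = P (m + k) ((G ^ k) (P m x)) := by
      have := congrArg (fun T : H →L[ℂ] H => T x) (hGk k m); simpa using this
    have hn : (G ^ k) (P n x) = P (n + k) ((G ^ k) (P n x)) := by
      have := congrArg (fun T : H →L[ℂ] H => T x) (hGk k n); simpa using this
    rw [hm, hn]
    exact hinner (m + k) (n + k) (by omega) _ _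
  have hs1 : HasSum (fun n => ‖(G ^ k) (P n x)‖ ^ 2) (‖(G ^ k) x‖ ^ 2) :=
    aux_hasSum_norm_sq _ _ horthG hs0
  -- termwise bound
  have hterm : ∀ n, ‖(G ^ k) (P n x)‖ ^ 2 ≤ M ^ 2 * ‖P n x‖ ^ 2 := by
    intro n
    have h2 : P n (P n x) = P n x := by
      have := congrArg (fun T : H →L[ℂ] H => T x) (hidem n); simpa using this
    have h3 : ‖(G ^ k) (P n x)‖ ≤ M * ‖P n x‖ := by
      calc ‖(G ^ k) (P n x)‖ = ‖((G ^ k) ∘L P n) (P n x)‖ := by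
            simp [ContinuousLinearMap.comp_apply, h2]
        _ ≤ ‖(G ^ k) ∘L P n‖ * ‖P n x‖ := ((G ^ k) ∘L P n).le_opNorm _
        _ ≤ M * ‖P n x‖ := by
            apply mul_le_mul_of_nonneg_right (hbound k n) (norm_nonneg _)
    calc ‖(G ^ k) (P n x)‖ ^ 2 ≤ (M * ‖P n x‖) ^ 2 := by
          apply pow_le_pow_left₀ (norm_nonneg _) h3
      _ = M ^ 2 * ‖P n x‖ ^ 2 := by ring
  have hsumle : ‖(G ^ k) x‖ ^ 2 ≤ M ^ 2 * ‖x‖ ^ 2 :=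
    hasSum_le hterm hs1 (hs2.mul_left (M ^ 2))
  have hfinal : ‖(G ^ k) x‖ ≤ M * ‖x‖ := by
    have h1 : ‖(G ^ k) x‖ ^ 2 ≤ (M * ‖x‖) ^ 2 := by rw [mul_pow]; exact hsumle
    have := Real.sqrt_le_sqrt h1
    rwa [Real.sqrt_sq (norm_nonneg _), Real.sqrt_sq (by positivity)] at this
  calc ‖(G ^ k) x‖ = ‖(G ^ k : H →L[ℂ] H) x‖ := rfl
    _ ≤ M * ‖x‖ := hfinal
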